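/- arXiv:1707.05854 — 2 statements merged into one kernel-verified Lean document; each statement's English description precedes it below -/
import Mathlib

section
/- Assume all corner concentration values of all cells are strictly positive, all values D₂₂^∓ lie in [0, D₂₂^M], all values |D₂₁^∓| are at most D₂₁^M, α̃ ≥ (Δx/(2Δy))·D₂₂^M + √3·D₂₁^M, and D₂₂^M·Λ₂ + 2(α̃ + D₂₁^M)·λ < Φ_m/12, where Φ_m is the minimum of Φ over all mesh corners. Then the y-diffusion part H^d_y := r̄_{ij}/6 − λ₂·∑_{β=1,2} w_β[ {D₂₁c_x + D₂₂c_y}_{i,j−1/2,β} + (α̃/Δx)·[c]_{i,j−1/2,β} − {D₂₁c_x + D₂₂c_y}_{i,j+1/2,β} − (α̃/Δx)·[c]_{i,j+1/2,β} ] is strictly positive for every interior cell (2 ≤ i ≤ N_x−1, 2 ≤ j ≤ N_y−1). -/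
noncomputable section

namespace DG2D

/-- Gauss constant `μ₁ = (3+√3)/6`. -/
def mu1 : ℝ := (3 + Real.sqrt 3) / 6

/-- Gauss constant `μ₂ = (3-√3)/6`. -/
def mu2 : ℝ := (3 - Real.sqrt 3) / 6

/-- Value at the Gauss point `β` of an edge, from the two endpoint (corner) values:
`β = 1` gives `μ₁·a + μ₂·b`, `β = 2` gives `μ₂·a + μ₁·b`. -/
def ga (β : Fin 2) (a b : ℝ) : ℝ := if β = 0 then mu1 * a + mu2 * b else mu2 * a + mu1 * b

/-- Cell average `r̄_{ij} = (1/4)·∑ cΦ` over the four corners of `K_{ij}`.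
`Φ i j` denotes the corner value `Φ_{i+1/2,j+1/2}`; `c00 i j`, `c10 i j`, `c01 i j`,
`c11 i j` denote the corner values of `c` in cell `K_{ij}` at the corners
`(i-1/2,j-1/2)`, `(i+1/2,j-1/2)`, `(i-1/2,j+1/2)`, `(i+1/2,j+1/2)` respectively. -/
def rbar (Φ c00 c10 c01 c11 : ℕ → ℕ → ℝ) (i j : ℕ) : ℝ :=
  (c00 i j * Φ (i - 1) (j - 1) + c10 i j * Φ i (j - 1)
    + c01 i j * Φ (i - 1) j + c11 i j * Φ i j) / 4

/-- Trace `c⁻` (from `K_{ij}`) at Gauss point `β` of the vertical edge `x_{i+1/2}`, row `j`. -/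
def cmV (c10 c11 : ℕ → ℕ → ℝ) (i j : ℕ) (β : Fin 2) : ℝ := ga β (c10 i j) (c11 i j)

/-- Trace `c⁺` (from `K_{i+1,j}`) at Gauss point `β` of the vertical edge `x_{i+1/2}`, row `j`. -/
def cpV (c00 c01 : ℕ → ℕ → ℝ) (i j : ℕ) (β : Fin 2) : ℝ := ga β (c00 (i + 1) j) (c01 (i + 1) j)

/-- Trace `c⁻` (from `K_{ij}`) at Gauss point `β` of the horizontal edge `y_{j+1/2}`, column `i`. -/
def cmH (c01 c11 : ℕ → ℕ → ℝ) (i j : ℕ) (β : Fin 2) : ℝ := ga β (c01 i j) (c11 i j)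

/-- Trace `c⁺` (from `K_{i,j+1}`) at Gauss point `β` of the horizontal edge `y_{j+1/2}`. -/
def cpH (c00 c10 : ℕ → ℕ → ℝ) (i j : ℕ) (β : Fin 2) : ℝ := ga β (c00 i (j + 1)) (c10 i (j + 1))

/-- Jump `[c] = c⁺ - c⁻` at a vertical-edge Gauss point. -/
def jumpV (c00 c10 c01 c11 : ℕ → ℕ → ℝ) (i j : ℕ) (β : Fin 2) : ℝ :=
  cpV c00 c01 i j β - cmV c10 c11 i j β

/-- Jump `[c] = c⁺ - c⁻` at a horizontal-edge Gauss point. -/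
def jumpH (c00 c10 c01 c11 : ℕ → ℕ → ℝ) (i j : ℕ) (β : Fin 2) : ℝ :=
  cpH c00 c10 i j β - cmH c01 c11 i j β

/-- Convective flux `û₁c = u₁⁺·c⁺ - α·[c]` at vertical-edge Gauss points. -/
def uc1 (u1 : ℕ → ℕ → Fin 2 → ℝ) (c00 c10 c01 c11 : ℕ → ℕ → ℝ) (α : ℝ)
    (i j : ℕ) (β : Fin 2) : ℝ :=
  u1 i j β * cpV c00 c01 i j β - α * (cpV c00 c01 i j β - cmV c10 c11 i j β)

/-- Convective flux `û₂c = u₂⁺·c⁺ - α·[c]` at horizontal-edge Gauss points. -/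
def uc2 (u2 : ℕ → ℕ → Fin 2 → ℝ) (c00 c10 c01 c11 : ℕ → ℕ → ℝ) (α : ℝ)
    (i j : ℕ) (β : Fin 2) : ℝ :=
  u2 i j β * cpH c00 c10 i j β - α * (cpH c00 c10 i j β - cmH c01 c11 i j β)

/-- Convection part `H^c_{ij}`. -/
def Hc (u1 u2 : ℕ → ℕ → Fin 2 → ℝ) (Φ c00 c10 c01 c11 : ℕ → ℕ → ℝ) (α Δx Δy Δt : ℝ)
    (i j : ℕ) : ℝ :=
  rbar Φ c00 c10 c01 c11 i j / 3
    + (Δt / Δx) * ∑ β : Fin 2, (1 / 2 : ℝ) *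
        (uc1 u1 c00 c10 c01 c11 α (i - 1) j β - uc1 u1 c00 c10 c01 c11 α i j β)
    + (Δt / Δy) * ∑ β : Fin 2, (1 / 2 : ℝ) *
        (uc2 u2 c00 c10 c01 c11 α i (j - 1) β - uc2 u2 c00 c10 c01 c11 α i j β)

/-- Derivative trace `(c_x)⁻` at a vertical-edge Gauss point:
`(c_x)⁻_{i+1/2,β} = (c⁻_{i+1/2,β} - c⁺_{i-1/2,β})/Δx`. -/
def cxmV (c00 c10 c01 c11 : ℕ → ℕ → ℝ) (Δx : ℝ) (i j : ℕ) (β : Fin 2) : ℝ :=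
  (cmV c10 c11 i j β - cpV c00 c01 (i - 1) j β) / Δx

/-- Derivative trace `(c_x)⁺` at a vertical-edge Gauss point:
`(c_x)⁺_{i+1/2,β} = (c⁻_{i+3/2,β} - c⁺_{i+1/2,β})/Δx`. -/
def cxpV (c00 c10 c01 c11 : ℕ → ℕ → ℝ) (Δx : ℝ) (i j : ℕ) (β : Fin 2) : ℝ :=
  (cmV c10 c11 (i + 1) j β - cpV c00 c01 i j β) / Δx

/-- Tangential derivative trace `(c_y)⁻` on a vertical edge:
`(√3/Δy)·(c⁻_{i+1/2,2} - c⁻_{i+1/2,1})` (the same for both Gauss points). -/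
def cymV (c10 c11 : ℕ → ℕ → ℝ) (Δy : ℝ) (i j : ℕ) : ℝ :=
  (Real.sqrt 3 / Δy) * (cmV c10 c11 i j 1 - cmV c10 c11 i j 0)

/-- Tangential derivative trace `(c_y)⁺` on a vertical edge. -/
def cypV (c00 c01 : ℕ → ℕ → ℝ) (Δy : ℝ) (i j : ℕ) : ℝ :=
  (Real.sqrt 3 / Δy) * (cpV c00 c01 i j 1 - cpV c00 c01 i j 0)

/-- Average `{D₁₁c_x + D₁₂c_y}` at a vertical-edge Gauss point. -/
def GxV (D11m D11p D12m D12p : ℕ → ℕ → Fin 2 → ℝ) (c00 c10 c01 c11 : ℕ → ℕ → ℝ)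
    (Δx Δy : ℝ) (i j : ℕ) (β : Fin 2) : ℝ :=
  (D11m i j β * cxmV c00 c10 c01 c11 Δx i j β + D12m i j β * cymV c10 c11 Δy i j
    + D11p i j β * cxpV c00 c10 c01 c11 Δx i j β + D12p i j β * cypV c00 c01 Δy i j) / 2

/-- x-diffusion part `H^d_x`. -/
def Hdx (D11m D11p D12m D12p : ℕ → ℕ → Fin 2 → ℝ) (Φ c00 c10 c01 c11 : ℕ → ℕ → ℝ)
    (αt Δx Δy Δt : ℝ) (i j : ℕ) : ℝ :=
  rbar Φ c00 c10 c01 c11 i j / 6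
    - (Δt / Δx) * ∑ β : Fin 2, (1 / 2 : ℝ) *
        ((GxV D11m D11p D12m D12p c00 c10 c01 c11 Δx Δy (i - 1) j β
            + (αt / Δy) * jumpV c00 c10 c01 c11 (i - 1) j β)
          - (GxV D11m D11p D12m D12p c00 c10 c01 c11 Δx Δy i j β
            + (αt / Δy) * jumpV c00 c10 c01 c11 i j β))

/-- Derivative trace `(c_y)⁻` at a horizontal-edge Gauss point. -/
def cymH (c00 c10 c01 c11 : ℕ → ℕ → ℝ) (Δy : ℝ) (i j : ℕ) (β : Fin 2) : ℝ :=
  (cmH c01 c11 i j β - cpH c00 c10 i (j - 1) β) / Δy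

/-- Derivative trace `(c_y)⁺` at a horizontal-edge Gauss point. -/
def cypH (c00 c10 c01 c11 : ℕ → ℕ → ℝ) (Δy : ℝ) (i j : ℕ) (β : Fin 2) : ℝ :=
  (cmH c01 c11 i (j + 1) β - cpH c00 c10 i j β) / Δy

/-- Tangential derivative trace `(c_x)⁻` on a horizontal edge. -/
def cxmH (c01 c11 : ℕ → ℕ → ℝ) (Δx : ℝ) (i j : ℕ) : ℝ :=
  (Real.sqrt 3 / Δx) * (cmH c01 c11 i j 1 - cmH c01 c11 i j 0)

/-- Tangential derivative trace `(c_x)⁺` on a horizontal edge. -/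
def cxpH (c00 c10 : ℕ → ℕ → ℝ) (Δx : ℝ) (i j : ℕ) : ℝ :=
  (Real.sqrt 3 / Δx) * (cpH c00 c10 i j 1 - cpH c00 c10 i j 0)

/-- Average `{D₂₁c_x + D₂₂c_y}` at a horizontal-edge Gauss point. -/
def GyH (D21m D21p D22m D22p : ℕ → ℕ → Fin 2 → ℝ) (c00 c10 c01 c11 : ℕ → ℕ → ℝ)
    (Δx Δy : ℝ) (i j : ℕ) (β : Fin 2) : ℝ :=
  (D21m i j β * cxmH c01 c11 Δx i j + D22m i j β * cymH c00 c10 c01 c11 Δy i j β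
    + D21p i j β * cxpH c00 c10 Δx i j + D22p i j β * cypH c00 c10 c01 c11 Δy i j β) / 2

/-- y-diffusion part `H^d_y`. -/
def Hdy (D21m D21p D22m D22p : ℕ → ℕ → Fin 2 → ℝ) (Φ c00 c10 c01 c11 : ℕ → ℕ → ℝ)
    (αt Δx Δy Δt : ℝ) (i j : ℕ) : ℝ :=
  rbar Φ c00 c10 c01 c11 i j / 6
    - (Δt / Δy) * ∑ β : Fin 2, (1 / 2 : ℝ) *
        ((GyH D21m D21p D22m D22p c00 c10 c01 c11 Δx Δy i (j - 1) β
            + (αt / Δx) * jumpH c00 c10 c01 c11 i (j - 1) β)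
          - (GyH D21m D21p D22m D22p c00 c10 c01 c11 Δx Δy i j β
            + (αt / Δx) * jumpH c00 c10 c01 c11 i j β))

/-- Value of the bilinear function `c` at the interior Gauss point `(β,γ)` of cell `K_{ij}`. -/
def cGP (c00 c10 c01 c11 : ℕ → ℕ → ℝ) (i j : ℕ) (β γ : Fin 2) : ℝ :=
  ga β (ga γ (c00 i j) (c01 i j)) (ga γ (c10 i j) (c11 i j))

/-- Value of the bilinear function `r = cΦ` at the interior Gauss point `(β,γ)` of `K_{ij}`. -/
def rGP (Φ c00 c10 c01 c11 : ℕ → ℕ → ℝ) (i j : ℕ) (β γ : Fin 2) : ℝ :=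
  ga β (ga γ (c00 i j * Φ (i - 1) (j - 1)) (c01 i j * Φ (i - 1) j))
    (ga γ (c10 i j * Φ i (j - 1)) (c11 i j * Φ i j))

/-- Value of the bilinear interpolant of `Φ` at the interior Gauss point `(β,γ)` of `K_{ij}`. -/
def phiGP (Φ : ℕ → ℕ → ℝ) (i j : ℕ) (β γ : Fin 2) : ℝ :=
  ga β (ga γ (Φ (i - 1) (j - 1)) (Φ (i - 1) j)) (ga γ (Φ i (j - 1)) (Φ i j))

/-- Source part `H^s_{ij}`. -/
def Hs (Φ c00 c10 c01 c11 : ℕ → ℕ → ℝ) (q ct P : ℕ → ℕ → Fin 2 → Fin 2 → ℝ)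
    (z1 Δt : ℝ) (i j : ℕ) : ℝ :=
  rbar Φ c00 c10 c01 c11 i j / 3
    + Δt * ∑ β : Fin 2, ∑ γ : Fin 2, (1 / 2 : ℝ) * (1 / 2 : ℝ) *
        (ct i j β γ * q i j β γ - z1 * rGP Φ c00 c10 c01 c11 i j β γ * P i j β γ)

/-- The Euler-forward cell-average update `r̄^{new}_{ij} = H^c + H^d_x + H^d_y + H^s`. -/
def rbarnew (u1 u2 D11m D11p D12m D12p D21m D21p D22m D22p : ℕ → ℕ → Fin 2 → ℝ)
    (Φ c00 c10 c01 c11 : ℕ → ℕ → ℝ) (q ct P : ℕ → ℕ → Fin 2 → Fin 2 → ℝ)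
    (α αt z1 Δx Δy Δt : ℝ) (i j : ℕ) : ℝ :=
  Hc u1 u2 Φ c00 c10 c01 c11 α Δx Δy Δt i j
    + Hdx D11m D11p D12m D12p Φ c00 c10 c01 c11 αt Δx Δy Δt i j
    + Hdy D21m D21p D22m D22p Φ c00 c10 c01 c11 αt Δx Δy Δt i j
    + Hs Φ c00 c10 c01 c11 q ct P z1 Δt i j


/-! ### Auxiliary lemmas for the proof -/

private lemma sqrt3_mul_self : Real.sqrt 3 * Real.sqrt 3 = 3 := Real.mul_self_sqrt (by norm_num)

private lemma sqrt3_nonneg : (0:ℝ) ≤ Real.sqrt 3 := Real.sqrt_nonneg 3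

private lemma one_le_sqrt3 : (1:ℝ) ≤ Real.sqrt 3 := by
  rw [show (1:ℝ) = Real.sqrt 1 from Real.sqrt_one.symm]
  exact Real.sqrt_le_sqrt (by norm_num)

private lemma sqrt3_le_two : Real.sqrt 3 ≤ 2 := by
  nlinarith [sqrt3_mul_self, sq_nonneg (Real.sqrt 3 - 2)]

private lemma ga_zero (a b : ℝ) : ga 0 a b = mu1*a + mu2*b := rfl

private lemma ga_one (a b : ℝ) : ga 1 a b = mu2*a + mu1*b := rfl

private lemma ga_diff (a b : ℝ) : Real.sqrt 3 * (ga 1 a b - ga 0 a b) = b - a := by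
  rw [ga_zero, ga_one, mu1, mu2]
  linear_combination ((b - a)/3) * sqrt3_mul_self

private lemma cxmH_eq (c01 c11 : ℕ → ℕ → ℝ) (Δx : ℝ) (i j : ℕ) :
    cxmH c01 c11 Δx i j = (c11 i j - c01 i j) / Δx := by
  unfold cxmH cmH
  rw [div_mul_eq_mul_div, ga_diff]

private lemma cxpH_eq (c00 c10 : ℕ → ℕ → ℝ) (Δx : ℝ) (i j : ℕ) :
    cxpH c00 c10 Δx i j = (c10 i (j+1) - c00 i (j+1)) / Δx := by
  unfold cxpH cpH
  rw [div_mul_eq_mul_div, ga_diff]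

private lemma comboNN (M x y : ℝ) (hx0 : 0 ≤ x) (hx : x ≤ M) (hy0 : 0 ≤ y) (hy : y ≤ M) :
    0 ≤ x*mu1 + y*mu2 ∧ x*mu1 + y*mu2 ≤ M := by
  have h0 := sqrt3_nonneg; have h2 := sqrt3_le_two
  unfold mu1 mu2
  constructor
  · nlinarith [mul_nonneg hx0 (show (0:ℝ) ≤ 3 + Real.sqrt 3 by linarith),
      mul_nonneg hy0 (show (0:ℝ) ≤ 3 - Real.sqrt 3 by linarith)]
  · nlinarith [mul_le_mul_of_nonneg_right hx (show (0:ℝ) ≤ 3 + Real.sqrt 3 by linarith),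
      mul_le_mul_of_nonneg_right hy (show (0:ℝ) ≤ 3 - Real.sqrt 3 by linarith)]

private lemma coefnn (Δx Δy Δt αt D21M D22M s t : ℝ)
    (hΔx : 0 < Δx) (hΔy : 0 < Δy) (hΔt : 0 < Δt)
    (hs : -(2*D21M) ≤ s) (ht' : t ≤ D22M) (hD21M : 0 ≤ D21M)
    (hαt2 : Δx*D22M + 2*Real.sqrt 3*Δy*D21M ≤ 2*Δy*αt) :
    0 ≤ Δt*Δy*s - Δt*Δx*t + 2*Δt*Δy*αt := by
  have hp : 0 ≤ (Real.sqrt 3 - 1) * (Δt*Δy*D21M) :=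
    mul_nonneg (by linarith [one_le_sqrt3]) (mul_nonneg (mul_pos hΔt hΔy).le hD21M)
  nlinarith [mul_le_mul_of_nonneg_left hαt2 hΔt.le,
    mul_le_mul_of_nonneg_left hs (mul_pos hΔt hΔy).le,
    mul_le_mul_of_nonneg_left ht' (mul_pos hΔt hΔx).le]

private lemma coefpos (Δx Δy Δt αt D21M D22M φ s t : ℝ)
    (hΔx : 0 < Δx) (hΔy : 0 < Δy) (hΔt : 0 < Δt) (hαt0 : 0 < αt)
    (hs : -(2*D21M) ≤ s) (ht : -D22M ≤ t) (hD21M : 0 ≤ D21M) (hD22M : 0 ≤ D22M)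
    (hCFL : D22M*(Δt/Δy^2) + 2*(αt+D21M)*(Δt/(Δx*Δy)) < φ/12) :
    0 < Δx*Δy^2*φ/6 + Δt*Δy*s - 2*Δt*Δy*αt + Δt*Δx*t := by
  have hk : D22M*Δt*Δx + 2*(αt+D21M)*(Δt*Δy) < Δx*Δy^2*φ/12 := by
    have h2 := mul_lt_mul_of_pos_left hCFL (show (0:ℝ) < Δx*Δy^2 by positivity)
    have e1 : Δx*Δy^2*(D22M*(Δt/Δy^2) + 2*(αt+D21M)*(Δt/(Δx*Δy)))
        = D22M*Δt*Δx + 2*(αt+D21M)*(Δt*Δy) := by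
      field_simp
    rw [e1] at h2
    linarith [h2]
  nlinarith [mul_le_mul_of_nonneg_left hs (mul_pos hΔt hΔy).le,
    mul_le_mul_of_nonneg_left ht (mul_pos hΔt hΔx).le,
    mul_nonneg (mul_nonneg hD22M hΔt.le) hΔx.le,
    mul_nonneg (mul_nonneg hD21M hΔt.le) hΔy.le,
    mul_pos hαt0 (mul_pos hΔt hΔy)]

set_option maxHeartbeats 2000000 in
/-- Lemma 3.6, y-part (2D): positivity of the y-diffusion part `H^d_y` for interior cells. -/
theorem y_diffusion_part_positive_2d
    (Nx Ny : ℕ) (hNx : 4 ≤ Nx) (hNy : 4 ≤ Ny) (Δx Δy Δt : ℝ)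
    (hΔx : 0 < Δx) (hΔy : 0 < Δy) (hΔt : 0 < Δt)
    (Φ c00 c10 c01 c11 : ℕ → ℕ → ℝ) (D21m D21p D22m D22p : ℕ → ℕ → Fin 2 → ℝ)
    (αt D22M D21M : ℝ)
    (hΦ : ∀ i j, i ≤ Nx → j ≤ Ny → 0 < Φ i j)
    -- all corner concentration values of all cells strictly positive
    (hc : ∀ i j, 1 ≤ i → i ≤ Nx → 1 ≤ j → j ≤ Ny →
      0 < c00 i j ∧ 0 < c10 i j ∧ 0 < c01 i j ∧ 0 < c11 i j)
    -- all D₂₂ values lie in [0, D₂₂^M], all |D₂₁| values are at most D₂₁^M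
    (hD22 : ∀ i j, 1 ≤ i → i ≤ Nx → 1 ≤ j → j ≤ Ny - 1 → ∀ β : Fin 2,
      (0 ≤ D22m i j β ∧ D22m i j β ≤ D22M) ∧ (0 ≤ D22p i j β ∧ D22p i j β ≤ D22M))
    (hD21 : ∀ i j, 1 ≤ i → i ≤ Nx → 1 ≤ j → j ≤ Ny - 1 → ∀ β : Fin 2,
      |D21m i j β| ≤ D21M ∧ |D21p i j β| ≤ D21M)
    -- α̃ > 0 and α̃ ≥ (Δx/(2Δy))·D₂₂^M + √3·D₂₁^M
    (hαt0 : 0 < αt)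
    (hαt : (Δx / (2 * Δy)) * D22M + Real.sqrt 3 * D21M ≤ αt)
    -- D₂₂^M·Λ₂ + 2(α̃ + D₂₁^M)·λ < Φ_m/12, Φ_m the minimum of Φ over all mesh corners
    (hCFL : ∀ i j, i ≤ Nx → j ≤ Ny →
      D22M * (Δt / Δy ^ 2) + 2 * (αt + D21M) * (Δt / (Δx * Δy)) < Φ i j / 12) :
    ∀ i j, 2 ≤ i → i ≤ Nx - 1 → 2 ≤ j → j ≤ Ny - 1 →
      0 < Hdy D21m D21p D22m D22p Φ c00 c10 c01 c11 αt Δx Δy Δt i j := by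
  intro i j hi hi' hj hj'
  obtain ⟨m, rfl⟩ : ∃ m, j = m + 2 := ⟨j - 2, by omega⟩
  have h1i : 1 ≤ i := by omega
  have hiNx : i ≤ Nx := by omega
  have hxne : Δx ≠ 0 := hΔx.ne'
  have hyne : Δy ≠ 0 := hΔy.ne'
  -- hypothesis instances
  have hA22 := hD22 i (m+1) h1i hiNx (by omega) (by omega)
  have hB22 := hD22 i (m+2) h1i hiNx (by omega) hj'
  have hA21 := hD21 i (m+1) h1i hiNx (by omega) (by omega)
  have hB21 := hD21 i (m+2) h1i hiNx (by omega) hj'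
  have hv := hc i (m+1) h1i hiNx (by omega) (by omega)
  have hu := hc i (m+2) h1i hiNx (by omega) (by omega)
  have hw := hc i (m+3) h1i hiNx (by omega) (by omega)
  have hD21M : 0 ≤ D21M := le_trans (abs_nonneg _) (hA21 0).1
  have hD22M : 0 ≤ D22M := le_trans ((hA22 0).1).1 ((hA22 0).1).2
  have hαt2 : Δx*D22M + 2*Real.sqrt 3*Δy*D21M ≤ 2*Δy*αt := by
    calc Δx*D22M + 2*Real.sqrt 3*Δy*D21M
        = (2*Δy)*((Δx/(2*Δy))*D22M + Real.sqrt 3*D21M) := by field_simp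
      _ ≤ (2*Δy)*αt := mul_le_mul_of_nonneg_left hαt (by positivity)
  -- combos
  have cA22m := comboNN D22M (D22m i (m+1) 0) (D22m i (m+1) 1)
    ((hA22 0).1).1 ((hA22 0).1).2 ((hA22 1).1).1 ((hA22 1).1).2
  have cA22m' := comboNN D22M (D22m i (m+1) 1) (D22m i (m+1) 0)
    ((hA22 1).1).1 ((hA22 1).1).2 ((hA22 0).1).1 ((hA22 0).1).2
  have cA22p := comboNN D22M (D22p i (m+1) 0) (D22p i (m+1) 1)
    ((hA22 0).2).1 ((hA22 0).2).2 ((hA22 1).2).1 ((hA22 1).2).2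
  have cA22p' := comboNN D22M (D22p i (m+1) 1) (D22p i (m+1) 0)
    ((hA22 1).2).1 ((hA22 1).2).2 ((hA22 0).2).1 ((hA22 0).2).2
  have cB22m := comboNN D22M (D22m i (m+2) 0) (D22m i (m+2) 1)
    ((hB22 0).1).1 ((hB22 0).1).2 ((hB22 1).1).1 ((hB22 1).1).2
  have cB22m' := comboNN D22M (D22m i (m+2) 1) (D22m i (m+2) 0)
    ((hB22 1).1).1 ((hB22 1).1).2 ((hB22 0).1).1 ((hB22 0).1).2
  have cB22p := comboNN D22M (D22p i (m+2) 0) (D22p i (m+2) 1)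
    ((hB22 0).2).1 ((hB22 0).2).2 ((hB22 1).2).1 ((hB22 1).2).2
  have cB22p' := comboNN D22M (D22p i (m+2) 1) (D22p i (m+2) 0)
    ((hB22 1).2).1 ((hB22 1).2).2 ((hB22 0).2).1 ((hB22 0).2).2
  have aA21m0 := abs_le.mp (hA21 0).1
  have aA21m1 := abs_le.mp (hA21 1).1
  have aA21p0 := abs_le.mp (hA21 0).2
  have aA21p1 := abs_le.mp (hA21 1).2
  have aB21m0 := abs_le.mp (hB21 0).1
  have aB21m1 := abs_le.mp (hB21 1).1
  have aB21p0 := abs_le.mp (hB21 0).2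
  have aB21p1 := abs_le.mp (hB21 1).2
  have hΔtΔx : (0:ℝ) ≤ Δt*Δx := (mul_pos hΔt hΔx).le
  -- the four cell-(i,j) coefficients, strictly positive
  have hC00 := coefpos Δx Δy Δt αt D21M D22M (Φ (i-1) (m+1))
    (D21p i (m+1) 0 + D21p i (m+1) 1)
    (D22p i (m+1) 0*mu1 + D22p i (m+1) 1*mu2 - (D22m i (m+2) 0*mu1 + D22m i (m+2) 1*mu2))
    hΔx hΔy hΔt hαt0 (by linarith) (by linarith [cA22p.1, cB22m.2]) hD21M hD22M
    (hCFL (i-1) (m+1) (by omega) (by omega))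
  have hC10 := coefpos Δx Δy Δt αt D21M D22M (Φ i (m+1))
    (-(D21p i (m+1) 0 + D21p i (m+1) 1))
    (D22p i (m+1) 0*mu2 + D22p i (m+1) 1*mu1 - (D22m i (m+2) 0*mu2 + D22m i (m+2) 1*mu1))
    hΔx hΔy hΔt hαt0 (by linarith) (by linarith [cA22p'.1, cB22m'.2]) hD21M hD22M
    (hCFL i (m+1) hiNx (by omega))
  have hC01 := coefpos Δx Δy Δt αt D21M D22M (Φ (i-1) (m+2))
    (-(D21m i (m+2) 0 + D21m i (m+2) 1))
    (D22m i (m+2) 0*mu1 + D22m i (m+2) 1*mu2 - (D22p i (m+1) 0*mu1 + D22p i (m+1) 1*mu2))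
    hΔx hΔy hΔt hαt0 (by linarith) (by linarith [cB22m.1, cA22p.2]) hD21M hD22M
    (hCFL (i-1) (m+2) (by omega) (by omega))
  have hC11 := coefpos Δx Δy Δt αt D21M D22M (Φ i (m+2))
    (D21m i (m+2) 0 + D21m i (m+2) 1)
    (D22m i (m+2) 0*mu2 + D22m i (m+2) 1*mu1 - (D22p i (m+1) 0*mu2 + D22p i (m+1) 1*mu1))
    hΔx hΔy hΔt hαt0 (by linarith) (by linarith [cB22m'.1, cA22p'.2]) hD21M hD22M
    (hCFL i (m+2) hiNx (by omega))
  -- foreign-cell coefficients, nonnegative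
  have hT01 := coefnn Δx Δy Δt αt D21M D22M
    (D21m i (m+1) 0 + D21m i (m+1) 1) (D22m i (m+1) 0*mu1 + D22m i (m+1) 1*mu2)
    hΔx hΔy hΔt (by linarith) (by linarith [cA22m.2]) hD21M hαt2
  have hT11 := coefnn Δx Δy Δt αt D21M D22M
    (-(D21m i (m+1) 0 + D21m i (m+1) 1)) (D22m i (m+1) 0*mu2 + D22m i (m+1) 1*mu1)
    hΔx hΔy hΔt (by linarith) (by linarith [cA22m'.2]) hD21M hαt2
  have hP00 := coefnn Δx Δy Δt αt D21M D22M
    (-(D21p i (m+2) 0 + D21p i (m+2) 1)) (D22p i (m+2) 0*mu1 + D22p i (m+2) 1*mu2)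
    hΔx hΔy hΔt (by linarith) (by linarith [cB22p.2]) hD21M hαt2
  have hP10 := coefnn Δx Δy Δt αt D21M D22M
    (D21p i (m+2) 0 + D21p i (m+2) 1) (D22p i (m+2) 0*mu2 + D22p i (m+2) 1*mu1)
    hΔx hΔy hΔt (by linarith) (by linarith [cB22p'.2]) hD21M hαt2
  -- express (4ΔxΔy²)·Hdy as an explicit positive combination
  have hEq : 4*Δx*Δy^2 * Hdy D21m D21p D22m D22p Φ c00 c10 c01 c11 αt Δx Δy Δt i (m+2) =
      (Δx*Δy^2*Φ (i-1) (m+1)/6 + Δt*Δy*(D21p i (m+1) 0 + D21p i (m+1) 1) - 2*Δt*Δy*αt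
        + Δt*Δx*(D22p i (m+1) 0*mu1 + D22p i (m+1) 1*mu2
            - (D22m i (m+2) 0*mu1 + D22m i (m+2) 1*mu2))) * c00 i (m+2)
      + (Δx*Δy^2*Φ i (m+1)/6 + Δt*Δy*(-(D21p i (m+1) 0 + D21p i (m+1) 1)) - 2*Δt*Δy*αt
        + Δt*Δx*(D22p i (m+1) 0*mu2 + D22p i (m+1) 1*mu1
            - (D22m i (m+2) 0*mu2 + D22m i (m+2) 1*mu1))) * c10 i (m+2)
      + (Δx*Δy^2*Φ (i-1) (m+2)/6 + Δt*Δy*(-(D21m i (m+2) 0 + D21m i (m+2) 1)) - 2*Δt*Δy*αt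
        + Δt*Δx*(D22m i (m+2) 0*mu1 + D22m i (m+2) 1*mu2
            - (D22p i (m+1) 0*mu1 + D22p i (m+1) 1*mu2))) * c01 i (m+2)
      + (Δx*Δy^2*Φ i (m+2)/6 + Δt*Δy*(D21m i (m+2) 0 + D21m i (m+2) 1) - 2*Δt*Δy*αt
        + Δt*Δx*(D22m i (m+2) 0*mu2 + D22m i (m+2) 1*mu1
            - (D22p i (m+1) 0*mu2 + D22p i (m+1) 1*mu1))) * c11 i (m+2)
      + (Δt*Δy*(D21m i (m+1) 0 + D21m i (m+1) 1)
          - Δt*Δx*(D22m i (m+1) 0*mu1 + D22m i (m+1) 1*mu2) + 2*Δt*Δy*αt) * c01 i (m+1)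
      + (Δt*Δy*(-(D21m i (m+1) 0 + D21m i (m+1) 1))
          - Δt*Δx*(D22m i (m+1) 0*mu2 + D22m i (m+1) 1*mu1) + 2*Δt*Δy*αt) * c11 i (m+1)
      + Δt*Δx*(D22m i (m+1) 0*mu1 + D22m i (m+1) 1*mu2) * c00 i (m+1)
      + Δt*Δx*(D22m i (m+1) 0*mu2 + D22m i (m+1) 1*mu1) * c10 i (m+1)
      + (Δt*Δy*(-(D21p i (m+2) 0 + D21p i (m+2) 1))
          - Δt*Δx*(D22p i (m+2) 0*mu1 + D22p i (m+2) 1*mu2) + 2*Δt*Δy*αt) * c00 i (m+3)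
      + (Δt*Δy*(D21p i (m+2) 0 + D21p i (m+2) 1)
          - Δt*Δx*(D22p i (m+2) 0*mu2 + D22p i (m+2) 1*mu1) + 2*Δt*Δy*αt) * c10 i (m+3)
      + Δt*Δx*(D22p i (m+2) 0*mu1 + D22p i (m+2) 1*mu2) * c01 i (m+3)
      + Δt*Δx*(D22p i (m+2) 0*mu2 + D22p i (m+2) 1*mu1) * c11 i (m+3) := by
    simp only [Hdy, GyH, rbar, jumpH, cymH, cypH, cmH, cpH, cxmH_eq, cxpH_eq, mu1, mu2,
      ga_zero, ga_one, Fin.sum_univ_two,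
      show m+2-1 = m+1 from rfl, show m+1-1 = m from rfl,
      show m+1+1 = m+2 from rfl, show m+2+1 = m+3 from rfl, show m+0+1 = m+1 from rfl]
    field_simp
    ring
  have hpos : 0 < 4*Δx*Δy^2 * Hdy D21m D21p D22m D22p Φ c00 c10 c01 c11 αt Δx Δy Δt i (m+2) := by
    rw [hEq]
    have p1 := mul_pos hC00 hu.1
    have p2 := mul_pos hC10 hu.2.1
    have p3 := mul_pos hC01 hu.2.2.1
    have p4 := mul_pos hC11 hu.2.2.2
    have p5 := mul_nonneg hT01 hv.2.2.1.le
    have p6 := mul_nonneg hT11 hv.2.2.2.le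
    have p7 := mul_nonneg (mul_nonneg hΔtΔx cA22m.1) hv.1.le
    have p8 := mul_nonneg (mul_nonneg hΔtΔx (show (0:ℝ) ≤ D22m i (m+1) 0*mu2 + D22m i (m+1) 1*mu1 by linarith [cA22m'.1])) hv.2.1.le
    have p9 := mul_nonneg hP00 hw.1.le
    have p10 := mul_nonneg hP10 hw.2.1.le
    have p11 := mul_nonneg (mul_nonneg hΔtΔx cB22p.1) hw.2.2.1.le
    have p12 := mul_nonneg (mul_nonneg hΔtΔx (show (0:ℝ) ≤ D22p i (m+2) 0*mu2 + D22p i (m+2) 1*mu1 by linarith [cB22p'.1])) hw.2.2.2.le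
    exact add_pos_of_pos_of_nonneg (add_pos_of_pos_of_nonneg (add_pos_of_pos_of_nonneg
      (add_pos_of_pos_of_nonneg (add_pos_of_pos_of_nonneg (add_pos_of_pos_of_nonneg
        (add_pos_of_pos_of_nonneg (add_pos_of_pos_of_nonneg
          (add_pos (add_pos (add_pos p1 p2) p3) p4)
        p5) p6) p7) p8) p9) p10) p11) p12
  by_contra hcon
  push_neg at hcon
  have hk4 : (0:ℝ) < 4*Δx*Δy^2 := by positivity
  have := mul_nonpos_of_nonneg_of_nonpos hk4.le hcon
  linarith [hpos, this]


end DG2D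
end
end

section
/- Assume all corner concentration values of all cells are strictly positive, z₁ ≥ 0, and that for every cell K_{ij} and every (β,γ) ∈ {1,2}²: 6Δt·z₁·max{P^{βγ}_{ij}, 0} ≤ 1; if q^{βγ}_{ij} ≥ 0 then c̃^{βγ}_{ij} ≥ 0; and if q^{βγ}_{ij} < 0 then c̃^{βγ}_{ij} = c(x_i^β, y_j^γ) and 6Δt(−q^{βγ}_{ij}) < Φ^m_{ij}, the minimum of Φ over the four corners of K_{ij}. Then the source part H^s_{ij} := r̄_{ij}/3 + Δt·∑_{β,γ} w_β w_γ (c̃^{βγ}_{ij}·q^{βγ}_{ij} − z₁·r(x_i^β, y_j^γ)·P^{βγ}_{ij}) is strictly positive for every cell. -/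
noncomputable section

namespace DG2D

lemma mu1_pos : 0 < mu1 := by
  have := Real.sqrt_nonneg 3
  unfold mu1; linarith

lemma mu2_pos : 0 < mu2 := by
  have h1 : Real.sqrt 3 ^ 2 = 3 := Real.sq_sqrt (by norm_num)
  have h2 := Real.sqrt_nonneg 3
  unfold mu2; nlinarith

lemma ga_pos (β : Fin 2) {a b : ℝ} (ha : 0 < a) (hb : 0 < b) : 0 < ga β a b := by
  unfold ga; split_ifs
  · exact add_pos (mul_pos mu1_pos ha) (mul_pos mu2_pos hb)
  · exact add_pos (mul_pos mu2_pos ha) (mul_pos mu1_pos hb)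

lemma ga_mono (β : Fin 2) {a a' b b' : ℝ} (ha : a' ≤ a) (hb : b' ≤ b) :
    ga β a' b' ≤ ga β a b := by
  unfold ga; split_ifs
  · exact add_le_add (mul_le_mul_of_nonneg_left ha mu1_pos.le)
      (mul_le_mul_of_nonneg_left hb mu2_pos.le)
  · exact add_le_add (mul_le_mul_of_nonneg_left ha mu2_pos.le)
      (mul_le_mul_of_nonneg_left hb mu1_pos.le)

lemma ga_smul (β : Fin 2) (k a b : ℝ) : ga β (k * a) (k * b) = k * ga β a b := by
  unfold ga; split_ifs <;> ring

set_option maxHeartbeats 2000000 in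
/-- Lemma 3.7 (2D): positivity of the source part `H^s_{ij}` for every cell. -/
theorem source_part_positive_2d
    (Nx Ny : ℕ) (hNx : 4 ≤ Nx) (hNy : 4 ≤ Ny) (Δx Δy Δt : ℝ)
    (hΔx : 0 < Δx) (hΔy : 0 < Δy) (hΔt : 0 < Δt)
    (Φ c00 c10 c01 c11 : ℕ → ℕ → ℝ) (q ct P : ℕ → ℕ → Fin 2 → Fin 2 → ℝ) (z1 : ℝ)
    (hΦ : ∀ i j, i ≤ Nx → j ≤ Ny → 0 < Φ i j)
    -- all corner concentration values of all cells strictly positive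
    (hc : ∀ i j, 1 ≤ i → i ≤ Nx → 1 ≤ j → j ≤ Ny →
      0 < c00 i j ∧ 0 < c10 i j ∧ 0 < c01 i j ∧ 0 < c11 i j)
    (hz1 : 0 ≤ z1)
    (hP : ∀ i j, 1 ≤ i → i ≤ Nx → 1 ≤ j → j ≤ Ny → ∀ β γ : Fin 2,
      6 * Δt * z1 * max (P i j β γ) 0 ≤ 1)
    (hq1 : ∀ i j, 1 ≤ i → i ≤ Nx → 1 ≤ j → j ≤ Ny → ∀ β γ : Fin 2,
      0 ≤ q i j β γ → 0 ≤ ct i j β γ)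
    (hq2 : ∀ i j, 1 ≤ i → i ≤ Nx → 1 ≤ j → j ≤ Ny → ∀ β γ : Fin 2,
      q i j β γ < 0 →
        ct i j β γ = cGP c00 c10 c01 c11 i j β γ ∧
        6 * Δt * (-q i j β γ)
          < min (min (Φ (i - 1) (j - 1)) (Φ i (j - 1))) (min (Φ (i - 1) j) (Φ i j))) :
    ∀ i j, 1 ≤ i → i ≤ Nx → 1 ≤ j → j ≤ Ny →
      0 < Hs Φ c00 c10 c01 c11 q ct P z1 Δt i j := by
  intro i j hi1 hi2 hj1 hj2
  obtain ⟨h00, h10, h01, h11⟩ := hc i j hi1 hi2 hj1 hj2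
  have hΦ00 : 0 < Φ (i - 1) (j - 1) :=
    hΦ _ _ (le_trans (Nat.sub_le i 1) hi2) (le_trans (Nat.sub_le j 1) hj2)
  have hΦ10 : 0 < Φ i (j - 1) := hΦ _ _ hi2 (le_trans (Nat.sub_le j 1) hj2)
  have hΦ01 : 0 < Φ (i - 1) j := hΦ _ _ (le_trans (Nat.sub_le i 1) hi2) hj2
  have hΦ11 : 0 < Φ i j := hΦ _ _ hi2 hj2
  set Φm := min (min (Φ (i - 1) (j - 1)) (Φ i (j - 1))) (min (Φ (i - 1) j) (Φ i j)) with hΦmdef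
  have hΦm_pos : 0 < Φm := lt_min (lt_min hΦ00 hΦ10) (lt_min hΦ01 hΦ11)
  have m00 : Φm ≤ Φ (i - 1) (j - 1) := le_trans (min_le_left _ _) (min_le_left _ _)
  have m10 : Φm ≤ Φ i (j - 1) := le_trans (min_le_left _ _) (min_le_right _ _)
  have m01 : Φm ≤ Φ (i - 1) j := le_trans (min_le_right _ _) (min_le_left _ _)
  have m11 : Φm ≤ Φ i j := le_trans (min_le_right _ _) (min_le_right _ _)
  have hpoint : ∀ β γ : Fin 2,
      0 < rGP Φ c00 c10 c01 c11 i j β γ / 3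
        + Δt * (ct i j β γ * q i j β γ
          - z1 * rGP Φ c00 c10 c01 c11 i j β γ * P i j β γ) := by
    intro β γ
    have hr : 0 < rGP Φ c00 c10 c01 c11 i j β γ :=
      ga_pos _ (ga_pos _ (mul_pos h00 hΦ00) (mul_pos h01 hΦ01))
        (ga_pos _ (mul_pos h10 hΦ10) (mul_pos h11 hΦ11))
    have hcg : 0 < cGP c00 c10 c01 c11 i j β γ :=
      ga_pos _ (ga_pos _ h00 h01) (ga_pos _ h10 h11)
    have hlow : Φm * cGP c00 c10 c01 c11 i j β γ ≤ rGP Φ c00 c10 c01 c11 i j β γ := by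
      unfold cGP rGP
      rw [← ga_smul, ← ga_smul, ← ga_smul]
      refine ga_mono _ (ga_mono _ ?_ ?_) (ga_mono _ ?_ ?_)
      · nlinarith
      · nlinarith
      · nlinarith
      · nlinarith
    have hPb : Δt * (z1 * rGP Φ c00 c10 c01 c11 i j β γ * P i j β γ)
        ≤ rGP Φ c00 c10 c01 c11 i j β γ / 6 := by
      have h1 := hP i j hi1 hi2 hj1 hj2 β γ
      have h2 : P i j β γ ≤ max (P i j β γ) 0 := le_max_left _ _
      have h3 : (0 : ℝ) ≤ max (P i j β γ) 0 := le_max_right _ _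
      nlinarith [mul_le_mul_of_nonneg_right h1 hr.le,
        mul_nonneg (mul_nonneg (mul_nonneg hΔt.le hz1) hr.le) (sub_nonneg.2 h2)]
    rcases lt_or_ge (q i j β γ) 0 with hq | hq
    · obtain ⟨hct, hqb⟩ := hq2 i j hi1 hi2 hj1 hj2 β γ hq
      rw [hct]
      nlinarith [mul_lt_mul_of_pos_right hqb hcg]
    · have hct := hq1 i j hi1 hi2 hj1 hj2 β γ hq
      nlinarith [mul_nonneg (mul_nonneg hΔt.le hct) hq]
  have hrbar : rbar Φ c00 c10 c01 c11 i j
      = (rGP Φ c00 c10 c01 c11 i j 0 0 + rGP Φ c00 c10 c01 c11 i j 0 1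
        + rGP Φ c00 c10 c01 c11 i j 1 0 + rGP Φ c00 c10 c01 c11 i j 1 1) / 4 := by
    have h2 : mu2 = 1 - mu1 := by unfold mu1 mu2; ring
    simp only [rbar, rGP, ga, if_pos rfl, if_neg (show (1 : Fin 2) ≠ 0 by decide), ite_true, h2]
    ring
  have p00 := hpoint 0 0
  have p01 := hpoint 0 1
  have p10 := hpoint 1 0
  have p11 := hpoint 1 1
  simp only [Hs, Fin.sum_univ_two]
  rw [hrbar]
  nlinarith [p00, p01, p10, p11]

end DG2D
end
end
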